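/- Let ρ be a Hermitian 3×3 complex matrix. Then ρ is a density matrix (i.e., positive semidefinite with trace 1) if and only if Tr(ρ) = 1, Tr(ρ²) ≤ 1, and 3·Tr(ρ²) − 2·Tr(ρ³) ≤ 1. -/

import Mathlib

open ComplexOrder

lemma key_real (a b c : ℝ) (h : a + b + c = 1) :
    (0 ≤ a ∧ 0 ≤ b ∧ 0 ≤ c) ↔
    (a^2+b^2+c^2 ≤ 1 ∧ 3*(a^2+b^2+c^2) - 2*(a^3+b^3+c^3) ≤ 1) := by
  constructor
  · rintro ⟨ha, hb, hc⟩
    constructor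
    · nlinarith [mul_nonneg ha hb, mul_nonneg ha hc, mul_nonneg hb hc]
    · nlinarith [mul_nonneg (mul_nonneg ha hb) hc, mul_nonneg ha hb, mul_nonneg ha hc,
        mul_nonneg hb hc]
  · rintro ⟨h2, h3⟩
    have e2 : 0 ≤ a*b+a*c+b*c := by nlinarith
    have e3 : 0 ≤ a*b*c := by nlinarith
    refine ⟨?_, ?_, ?_⟩ <;> by_contra hneg <;> push_neg at hneg
    · have hid : a^3 - a^2 + (a*b+a*c+b*c)*a - a*b*c = 0 := by linear_combination a^2 * h
      nlinarith [mul_nonpos_of_nonneg_of_nonpos e2 hneg.le, mul_pos_of_neg_of_neg hneg hneg,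
        mul_neg_of_neg_of_pos hneg (mul_pos_of_neg_of_neg hneg hneg)]
    · have hid : b^3 - b^2 + (a*b+a*c+b*c)*b - a*b*c = 0 := by linear_combination b^2 * h
      nlinarith [mul_nonpos_of_nonneg_of_nonpos e2 hneg.le, mul_pos_of_neg_of_neg hneg hneg,
        mul_neg_of_neg_of_pos hneg (mul_pos_of_neg_of_neg hneg hneg)]
    · have hid : c^3 - c^2 + (a*b+a*c+b*c)*c - a*b*c = 0 := by linear_combination c^2 * h
      nlinarith [mul_nonpos_of_nonneg_of_nonpos e2 hneg.le, mul_pos_of_neg_of_neg hneg hneg,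
        mul_neg_of_neg_of_pos hneg (mul_pos_of_neg_of_neg hneg hneg)]

lemma trace_pow_eq {n : ℕ} (ρ : Matrix (Fin 3) (Fin 3) ℂ) (hρ : ρ.IsHermitian) :
    (ρ ^ n).trace = ((∑ i, hρ.eigenvalues i ^ n : ℝ) : ℂ) := by
  set U : Matrix (Fin 3) (Fin 3) ℂ := (hρ.eigenvectorUnitary : Matrix (Fin 3) (Fin 3) ℂ)
  have hU : U * star U = 1 := (Matrix.mem_unitaryGroup_iff).mp hρ.eigenvectorUnitary.2
  have hU' : star U * U = 1 := (Matrix.mem_unitaryGroup_iff').mp hρ.eigenvectorUnitary.2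
  set D : Matrix (Fin 3) (Fin 3) ℂ := Matrix.diagonal (RCLike.ofReal ∘ hρ.eigenvalues)
  have hpow : ρ ^ n = U * D ^ n * star U := by
    induction n with
    | zero => simp [hU]
    | succ k ih =>
      have hst : ρ = U * D * star U := hρ.spectral_theorem
      rw [pow_succ, ih, hst]
      rw [show U * D ^ k * star U * (U * D * star U) = U * D ^ k * (star U * U) * D * star U by
        noncomm_ring]
      rw [hU']
      noncomm_ring
  rw [hpow, Matrix.trace_mul_cycle, hU', Matrix.one_mul,
    Matrix.diagonal_pow, Matrix.trace_diagonal]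
  push_cast
  rfl

theorem density_iff_trace_conditions
    (ρ : Matrix (Fin 3) (Fin 3) ℂ) (hρ : ρ.IsHermitian) :
    (ρ.PosSemidef ∧ ρ.trace = 1) ↔
      (ρ.trace = 1 ∧ ((ρ ^ 2).trace).re ≤ 1 ∧
        3 * ((ρ ^ 2).trace).re - 2 * ((ρ ^ 3).trace).re ≤ 1) := by
  set l := hρ.eigenvalues with hl
  have htr : ρ.trace = ((l 0 + l 1 + l 2 : ℝ) : ℂ) := by
    have := trace_pow_eq (n := 1) ρ hρ
    simpa [Fin.sum_univ_three] using this
  have h2re : ((ρ ^ 2).trace).re = l 0 ^ 2 + l 1 ^ 2 + l 2 ^ 2 := by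
    rw [trace_pow_eq (n := 2) ρ hρ, Fin.sum_univ_three]
    simp [← Complex.ofReal_pow, ← hl]
  have h3re : ((ρ ^ 3).trace).re = l 0 ^ 3 + l 1 ^ 3 + l 2 ^ 3 := by
    rw [trace_pow_eq (n := 3) ρ hρ, Fin.sum_univ_three]
    simp [← Complex.ofReal_pow, ← hl]
  have hsum1 : ρ.trace = 1 ↔ l 0 + l 1 + l 2 = 1 := by
    rw [htr]
    exact_mod_cast Complex.ofReal_eq_one
  constructor
  · rintro ⟨hpsd, ht1⟩
    have hsum := hsum1.mp ht1
    have hkey := (key_real (l 0) (l 1) (l 2) hsum).mp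
      ⟨hpsd.eigenvalues_nonneg 0, hpsd.eigenvalues_nonneg 1, hpsd.eigenvalues_nonneg 2⟩
    exact ⟨ht1, by rw [h2re]; exact hkey.1, by rw [h2re, h3re]; exact hkey.2⟩
  · rintro ⟨ht1, h2, h3⟩
    have hsum := hsum1.mp ht1
    rw [h2re] at h2
    rw [h2re, h3re] at h3
    have hkey := (key_real (l 0) (l 1) (l 2) hsum).mpr ⟨h2, h3⟩
    refine ⟨hρ.posSemidef_iff_eigenvalues_nonneg.mpr fun i => ?_, ht1⟩
    fin_cases i
    exacts [hkey.1, hkey.2.1, hkey.2.2]
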